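/- Let $c_0 > 0$, $c > 0$, and $c_i \in (0, c]$ for $i \ge 1$, with $p \in (0,1)$. Then $\sum_{t=1}^{T} \frac{c_{t+1}}{(c_0 + \sum_{i=1}^{t-1} c_i)^p} \le \frac{6c}{c_0^p} + \frac{1}{1-p}\left(\sum_{i=1}^{T} c_i\right)^{1-p}$, where the sum $\sum_{i=1}^{t-1} c_i$ is empty (equal to $0$) when $t = 1$. -/

import Mathlib

open Finset

lemma amgm_key (p : ℝ) (hp0 : 0 < p) (hp1 : p < 1) (a b : ℝ) (ha : 0 ≤ a)
    (hb : 0 < b) : (b - a) / b ^ p ≤ (b ^ (1 - p) - a ^ (1 - p)) / (1 - p) := by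
  have hbp : (0:ℝ) < b ^ p := Real.rpow_pos_of_pos hb p
  have h1p : (0:ℝ) < 1 - p := by linarith
  have hgm : b ^ p * a ^ (1 - p) ≤ p * b + (1 - p) * a :=
    Real.geom_mean_le_arith_mean2_weighted hp0.le h1p.le hb.le ha (by ring)
  have hbb : b ^ p * b ^ (1 - p) = b := by
    rw [← Real.rpow_add hb]; norm_num
  rw [div_le_div_iff₀ hbp h1p]
  nlinarith [hgm, hbb]

lemma helper_key (d cm X Y Z : ℝ) (hd : 0 < d) (hdc : d ≤ cm) (hX : 0 < X) (hY : 0 < Y)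
    (hYZ : Y ≤ Z) (hXZ : X ≤ Z) : d / X ≤ d / Y + cm * (X⁻¹ - Z⁻¹) := by
  have hZ : 0 < Z := hY.trans_le hYZ
  rcases le_or_gt Y X with h | h
  · have h1 : d / X ≤ d / Y := div_le_div_of_nonneg_left hd.le hY h
    have h2 : Z⁻¹ ≤ X⁻¹ := inv_anti₀ hX hXZ
    nlinarith
  · have e1 : d / X - d / Y = d * (Y - X) / (X * Y) := by field_simp
    have e2 : cm * (X⁻¹ - Z⁻¹) = cm * (Z - X) / (X * Z) := by field_simp
    have main : d * (Y - X) / (X * Y) ≤ cm * (Z - X) / (X * Z) := by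
      rw [div_le_div_iff₀ (by positivity) (by positivity)]
      nlinarith [mul_nonneg (sub_nonneg.2 hdc) (mul_nonneg (mul_nonneg hX.le hZ.le) (sub_nonneg.2 h.le)),
        mul_nonneg (mul_nonneg (mul_nonneg hd.le hX.le) hX.le) (sub_nonneg.2 hYZ)]
    linarith

theorem stmt3 (T : ℕ) (hT : 1 ≤ T) (c₀ cmax : ℝ) (hc0 : 0 < c₀) (hcmax : 0 < cmax)
    (c : ℕ → ℝ) (hc : ∀ i, 1 ≤ i → 0 < c i ∧ c i ≤ cmax)
    (p : ℝ) (hp0 : 0 < p) (hp1 : p < 1) :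
    ∑ t ∈ Icc 1 T, c (t + 1) / (c₀ + ∑ i ∈ Icc 1 (t - 1), c i) ^ p ≤
      6 * cmax / c₀ ^ p + (1 / (1 - p)) * (∑ i ∈ Icc 1 T, c i) ^ (1 - p) := by
  set d : ℕ → ℝ := fun i => c (i + 1) with hd_def
  have hd : ∀ i, 0 < d i ∧ d i ≤ cmax := fun i => hc (i + 1) (by omega)
  set A : ℕ → ℝ := fun n => ∑ i ∈ range n, d i with hA_def
  have hApos : ∀ n, 0 ≤ A n := fun n => Finset.sum_nonneg fun i _ => (hd i).1.le
  have hAmono : ∀ m n, m ≤ n → A m ≤ A n := fun m n h =>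
    Finset.sum_le_sum_of_subset_of_nonneg (Finset.range_subset_range.2 h) fun i _ _ => (hd i).1.le
  have hAsucc : ∀ n, A (n + 1) = A n + d n := fun n => Finset.sum_range_succ d n
  have hAgt : ∀ n, 1 ≤ n → 0 < A n := by
    intro n hn
    calc (0:ℝ) < d 0 := (hd 0).1
    _ = A 1 := by simp [hA_def]
    _ ≤ A n := hAmono 1 n hn
  have hIcc : ∀ n, ∑ i ∈ Icc 1 n, c i = A n := by
    intro n
    induction n with
    | zero => simp [hA_def]
    | succ k ih =>
      rw [Finset.sum_Icc_succ_top (by omega), ih, hAsucc]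
  have hL : ∑ t ∈ Icc 1 T, c (t + 1) / (c₀ + ∑ i ∈ Icc 1 (t - 1), c i) ^ p
      = ∑ s ∈ range T, d (s + 1) / (c₀ + A s) ^ p := by
    rw [← Finset.Ico_add_one_right_eq_Icc, Finset.sum_Ico_eq_sum_range]
    apply Finset.sum_congr (by simp)
    intro i _
    rw [show 1 + i + 1 = i + 1 + 1 from by omega, show 1 + i - 1 = i from by omega, hIcc]
  rw [hL, hIcc]
  obtain ⟨N, rfl⟩ : ∃ N, T = N + 1 := ⟨T - 1, by omega⟩
  rw [Finset.sum_range_succ]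
  have hc0p : (0:ℝ) < c₀ ^ p := Real.rpow_pos_of_pos hc0 p
  have hlast : d (N + 1) / (c₀ + A N) ^ p ≤ cmax / c₀ ^ p := by
    apply div_le_div₀ hcmax.le (hd (N + 1)).2 hc0p
    exact Real.rpow_le_rpow hc0.le (by linarith [hApos N]) hp0.le
  set F : ℕ → ℝ := fun n => ((c₀ + A n) ^ p)⁻¹ with hF_def
  have hterm : ∀ s, d (s + 1) / (c₀ + A s) ^ p
      ≤ d (s + 1) / (A (s + 2)) ^ p + cmax * (F s - F (s + 2)) := by
    intro s
    have h1 : (0:ℝ) < c₀ + A s := by linarith [hApos s]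
    have h2 : (0:ℝ) < A (s + 2) := hAgt (s + 2) (by omega)
    have h3 : A (s + 2) ≤ c₀ + A (s + 2) := by linarith
    have h4 : c₀ + A s ≤ c₀ + A (s + 2) := by linarith [hAmono s (s + 2) (by omega)]
    exact helper_key (d (s + 1)) cmax ((c₀ + A s) ^ p) ((A (s + 2)) ^ p) ((c₀ + A (s + 2)) ^ p)
      (hd (s + 1)).1 (hd (s + 1)).2 (Real.rpow_pos_of_pos h1 p) (Real.rpow_pos_of_pos h2 p)
      (Real.rpow_le_rpow h2.le h3 hp0.le) (Real.rpow_le_rpow h1.le h4 hp0.le)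
  have hsum1 : ∑ s ∈ range N, d (s + 1) / (c₀ + A s) ^ p
      ≤ ∑ s ∈ range N, d (s + 1) / (A (s + 2)) ^ p
        + ∑ s ∈ range N, cmax * (F s - F (s + 2)) := by
    rw [← Finset.sum_add_distrib]
    exact Finset.sum_le_sum fun s _ => hterm s
  have htel : ∑ s ∈ range N, cmax * (F s - F (s + 2)) ≤ 2 * (cmax / c₀ ^ p) := by
    rw [← Finset.mul_sum]
    have hFle : ∀ n, F n ≤ (c₀ ^ p)⁻¹ := by
      intro n
      apply inv_anti₀ hc0p
      exact Real.rpow_le_rpow hc0.le (by linarith [hApos n]) hp0.le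
    have hFpos : ∀ n, 0 ≤ F n := fun n =>
      inv_nonneg.2 (Real.rpow_nonneg (by linarith [hApos n]) p)
    have htel2 : ∑ s ∈ range N, (F s - F (s + 2)) = (F 0 - F N) + (F 1 - F (N + 1)) := by
      have e : ∀ s ∈ range N, F s - F (s + 2)
          = (F s - F (s + 1)) + ((fun t => F (t + 1)) s - (fun t => F (t + 1)) (s + 1)) :=
        fun s _ => by simp only []; ring
      rw [Finset.sum_congr rfl e, Finset.sum_add_distrib, Finset.sum_range_sub' F,
        Finset.sum_range_sub' (fun t => F (t + 1))]
    rw [htel2]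
    have hs : (F 0 - F N) + (F 1 - F (N + 1)) ≤ 2 * (c₀ ^ p)⁻¹ := by
      have := hFle 0; have := hFle 1; have := hFpos N; have := hFpos (N + 1); linarith
    calc cmax * ((F 0 - F N) + (F 1 - F (N + 1))) ≤ cmax * (2 * (c₀ ^ p)⁻¹) :=
        mul_le_mul_of_nonneg_left hs hcmax.le
    _ = 2 * (cmax / c₀ ^ p) := by rw [div_eq_mul_inv]; ring
  have h1p : (0:ℝ) < 1 - p := by linarith
  have hmain : ∑ s ∈ range N, d (s + 1) / (A (s + 2)) ^ p
      ≤ (1 / (1 - p)) * (A (N + 1)) ^ (1 - p) := by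
    have step : ∀ s ∈ range N, d (s + 1) / (A (s + 2)) ^ p
        ≤ ((A (s + 2)) ^ (1 - p) - (A (s + 1)) ^ (1 - p)) / (1 - p) := by
      intro s _
      have hb : (0:ℝ) < A (s + 2) := hAgt _ (by omega)
      have heq : A (s + 2) - A (s + 1) = d (s + 1) := by rw [hAsucc (s + 1)]; ring
      calc d (s + 1) / (A (s + 2)) ^ p = (A (s + 2) - A (s + 1)) / (A (s + 2)) ^ p := by
            rw [heq]
      _ ≤ _ := amgm_key p hp0 hp1 _ _ (hApos (s + 1)) hb
    calc ∑ s ∈ range N, d (s + 1) / (A (s + 2)) ^ p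
        ≤ ∑ s ∈ range N, ((A (s + 2)) ^ (1 - p) - (A (s + 1)) ^ (1 - p)) / (1 - p) :=
          Finset.sum_le_sum step
    _ = ((A (N + 1)) ^ (1 - p) - (A 1) ^ (1 - p)) / (1 - p) := by
        rw [← Finset.sum_div, Finset.sum_range_sub (fun s => (A (s + 1)) ^ (1 - p))]
    _ ≤ (A (N + 1)) ^ (1 - p) / (1 - p) := by
        have h0 : (0:ℝ) ≤ (A 1) ^ (1 - p) := Real.rpow_nonneg (hApos 1) _
        have h00 : (0:ℝ) ≤ (A (N + 1)) ^ (1 - p) := Real.rpow_nonneg (hApos _) _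
        exact div_le_div₀ h00 (by linarith) h1p le_rfl
    _ = (1 / (1 - p)) * (A (N + 1)) ^ (1 - p) := by ring
  have hnn : (0:ℝ) ≤ cmax / c₀ ^ p := by positivity
  have e6 : 6 * cmax / c₀ ^ p = 6 * (cmax / c₀ ^ p) := by ring
  linarith
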